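/- Let (x_i^{(n)})_{i ≤ n} be integers satisfying x_i^{(n)} = ∑_{j=0}^{n-i} C(n-i, j) x_{n-3j}^{(n-3j)} for all i ≤ n, and suppose additionally x_2^{(n)} = 0 for all n. Then for all n ≥ 6, x_{12-2n}^{(12-2n)} = -∑_{j=1}^{n-5} C(n-5, j-1) · x_{n-3j}^{(n-3j)}. -/

import Mathlib

theorem stmt_7 (x : ℤ → ℤ → ℤ)
    (hbin : ∀ i n : ℤ, i ≤ n →
      x i n = ∑ j ∈ Finset.range ((n - i).toNat + 1),
        (Nat.choose (n - i).toNat j : ℤ) * x (n - 3 * j) (n - 3 * j))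
    (hx2 : ∀ n : ℤ, 2 ≤ n → x 2 n = 0) :
    ∀ n : ℤ, 6 ≤ n →
      x (12 - 2 * n) (12 - 2 * n) =
        - ∑ j ∈ Finset.Icc 1 (n - 5).toNat,
            (Nat.choose (n - 5).toNat (j - 1) : ℤ) * x (n - 3 * j) (n - 3 * j) := by
  intro n hn
  have hmn : (2:ℤ) ≤ n - 3 := by linarith
  have h := hbin 2 (n - 3) hmn
  rw [hx2 (n - 3) hmn] at h
  have hm5 : n - 3 - 2 = n - 5 := by ring
  rw [hm5] at h
  set m := (n - 5).toNat with hmdef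
  have hmz : (m : ℤ) = n - 5 := Int.toNat_of_nonneg (by linarith)
  rw [Finset.sum_range_succ] at h
  have hlast : n - 3 - 3 * (m : ℤ) = 12 - 2 * n := by rw [hmz]; ring
  rw [hlast, Nat.choose_self] at h
  have hsum : ∑ j ∈ Finset.Icc 1 m, (Nat.choose m (j - 1) : ℤ) * x (n - 3 * j) (n - 3 * j)
      = ∑ j ∈ Finset.range m, (Nat.choose m j : ℤ) * x (n - 3 - 3 * j) (n - 3 - 3 * j) := by
    rw [show Finset.Icc 1 m = Finset.Ico 1 (m+1) from rfl, Finset.sum_Ico_eq_sum_range]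
    apply Finset.sum_congr
    · simp
    · intro i _
      have h1 : 1 + i - 1 = i := by omega
      have h2 : n - 3 * ((1 + i : ℕ) : ℤ) = n - 3 - 3 * (i : ℤ) := by push_cast; ring
      rw [h1, h2]
  rw [hsum]
  push_cast at h
  linarith [h]
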